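/- Let μ be a Borel probability measure on a metric space X and d ≥ 0. If the lower pointwise dimension satisfies liminf_{ρ→0} log μ(B(x,ρ))/log ρ ≥ d for μ-a.e. x, then the Hausdorff dimension of μ, defined as inf{dim_H Z : Z Borel, μ(X∖Z)=0}, is at least d. -/

import Mathlib

open MeasureTheory Filter Metric
open scoped ENNReal NNReal

lemma liminf_aux9 {u : ℝ → ℝ} {l : Filter ℝ} {a b : ℝ} (hab : b < a) (h0 : 0 < a)
    (h : a ≤ liminf u l) : ∀ᶠ r in l, b < u r := by
  rw [liminf_eq] at h
  rcases Set.eq_empty_or_nonempty {c | ∀ᶠ n in l, c ≤ u n} with hS | hS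
  · rw [hS, Real.sSup_empty] at h; linarith
  · obtain ⟨c, hc, hbc⟩ := exists_lt_of_lt_csSup hS (lt_of_lt_of_le hab h)
    exact hc.mono fun r hr => lt_of_lt_of_le hbc hr

lemma closed_aux9 {X : Type*} [MetricSpace X] [MeasurableSpace X] [BorelSpace X]
    (μ : Measure X) (q : ℝ) (hq : 0 < q) (c : ℝ≥0∞) :
    IsClosed {x : X | μ (ball x q) ≤ c} := by
  rw [← isOpen_compl_iff, Metric.isOpen_iff]
  intro x hx
  simp only [Set.mem_compl_iff, Set.mem_setOf_eq, not_le] at hx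
  have hunion : ball x q = ⋃ n : ℕ, ball x (q - q / (n + 2)) := by
    ext y
    simp only [mem_ball, Set.mem_iUnion]
    constructor
    · intro hy
      obtain ⟨n, hn⟩ := exists_nat_gt (q / (q - dist y x) - 2)
      refine ⟨n, ?_⟩
      have h1 : 0 < q - dist y x := by linarith
      have h2 : q / (q - dist y x) < (n : ℝ) + 2 := by linarith
      have h3 : q / ((n : ℝ) + 2) < q - dist y x := by
        rw [div_lt_iff₀ (by positivity)]
        calc q = (q / (q - dist y x)) * (q - dist y x) := by field_simp
          _ < ((n : ℝ) + 2) * (q - dist y x) := mul_lt_mul_of_pos_right h2 h1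
          _ = (q - dist y x) * ((n : ℝ) + 2) := mul_comm _ _
      linarith
    · rintro ⟨n, hn⟩
      have h4 : 0 < q / ((n : ℝ) + 2) := by positivity
      linarith
  have hmono : Monotone fun n : ℕ => ball x (q - q / (n + 2)) := by
    intro m n hmn
    apply ball_subset_ball
    have : q / ((n : ℝ) + 2) ≤ q / ((m : ℝ) + 2) := by
      apply div_le_div_of_nonneg_left hq.le (by positivity)
      exact_mod_cast by omega
    linarith
  rw [hunion, (hmono.directed_le).measure_iUnion, lt_iSup_iff] at hx
  obtain ⟨n, hn⟩ := hx
  refine ⟨q / ((n : ℝ) + 2), by positivity, fun y hy => ?_⟩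
  simp only [Set.mem_compl_iff, Set.mem_setOf_eq, not_le]
  refine lt_of_lt_of_le hn (measure_mono (ball_subset_ball' ?_))
  have : dist x y < q / ((n : ℝ) + 2) := by rwa [dist_comm, ← mem_ball]
  linarith

lemma main_aux9 {X : Type*} [MetricSpace X] [MeasurableSpace X] [BorelSpace X]
    (μ : Measure X) [IsProbabilityMeasure μ] {Z : Set X} (hZ : MeasurableSet Z)
    (hZc : μ Zᶜ = 0) {d' d'' : ℝ} (h1 : 0 < d') (h2 : d' < d'')
    (h : ∀ᵐ x ∂μ, ∀ᶠ r in nhdsWithin 0 (Set.Ioi 0),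
        μ (ball x r) ≤ ENNReal.ofReal (r ^ d'')) :
    ENNReal.ofReal d' ≤ dimH Z := by
  have hd''0 : 0 < d'' := h1.trans h2
  set A : ℕ → Set X := fun k => ⋂ (q : ℚ) (_ : 0 < (q : ℝ)) (_ : (q : ℝ) < 1 / (k + 1)),
      {x : X | μ (ball x (q : ℝ)) ≤ ENNReal.ofReal ((q : ℝ) ^ d'')} with hA
  have hAmeas : ∀ k, MeasurableSet (A k) := by
    intro k
    refine MeasurableSet.iInter fun q => MeasurableSet.iInter fun hq =>
      MeasurableSet.iInter fun _ => (closed_aux9 μ (q : ℝ) hq _).measurableSet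
  have hAcover : ∀ᵐ x ∂μ, x ∈ ⋃ k, A k := by
    filter_upwards [h] with x hx
    rw [eventually_iff, mem_nhdsWithin_iff] at hx
    obtain ⟨ε, hε, hball⟩ := hx
    obtain ⟨k, hk⟩ := exists_nat_one_div_lt hε
    refine Set.mem_iUnion.mpr ⟨k, ?_⟩
    simp only [hA, Set.mem_iInter, Set.mem_setOf_eq]
    intro q hq0 hqk
    have hqε : (q : ℝ) < ε := lt_trans hqk hk
    refine hball ⟨?_, hq0⟩
    rw [mem_ball, Real.dist_eq, sub_zero, abs_of_pos hq0]
    exact hqε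
  obtain ⟨k, hk⟩ : ∃ k, 0 < μ (A k) := by
    by_contra hall
    push_neg at hall
    have hz : ∀ k, μ (A k) = 0 := fun k => le_antisymm (hall k) (zero_le)
    have h1' : μ (⋃ k, A k) = 0 :=
      le_antisymm ((measure_iUnion_le _).trans (by simp [hz])) (zero_le)
    have h2' : μ (⋃ k, A k)ᶜ = 0 := ae_iff.mp hAcover
    have : (1 : ℝ≥0∞) ≤ 0 := by
      calc (1 : ℝ≥0∞) = μ Set.univ := (measure_univ).symm
        _ ≤ μ (⋃ k, A k) + μ (⋃ k, A k)ᶜ := by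
            rw [← Set.union_compl_self (⋃ k, A k)]; exact measure_union_le _ _
        _ = 0 := by rw [h1', h2', add_zero]
    simp at this
  set B := A k ∩ Z with hB
  have hBmeas : MeasurableSet B := (hAmeas k).inter hZ
  have hμB : 0 < μ B := by
    refine lt_of_lt_of_le hk ?_
    calc μ (A k) ≤ μ (A k ∩ Z) + μ (A k \ Z) := measure_le_inter_add_diff μ _ _
      _ ≤ μ B + μ Zᶜ := by
          gcongr
          exact fun y hy => hy.2
      _ = μ B := by rw [hZc, add_zero]
  -- mass distribution principle
  set ε0 : ℝ := 1 / (2 * (k + 1)) with hε0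
  have hε0pos : 0 < ε0 := by positivity
  have hε0le : ε0 < 1 / (k + 1 : ℝ) := by
    rw [hε0, div_lt_div_iff₀ (by positivity) (by positivity)]
    nlinarith [Nat.cast_nonneg (α := ℝ) k]
  have hε0le1 : ε0 ≤ 1 := by
    rw [hε0]
    rw [div_le_one (by positivity)]
    nlinarith [Nat.cast_nonneg (α := ℝ) k]
  have hmass : μ.restrict B ≤ μH[d'] := by
    refine Measure.le_hausdorffMeasure d' _ (ENNReal.ofReal ε0) (by simpa using hε0pos) ?_
    intro s hs
    have hdiam_ne : EMetric.diam s ≠ ⊤ :=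
      ne_top_of_le_ne_top ENNReal.ofReal_ne_top hs
    set t : ℝ := (EMetric.diam s).toReal with ht
    have ht0 : 0 ≤ t := ENNReal.toReal_nonneg
    have htε0 : t ≤ ε0 := by
      have := ENNReal.toReal_mono ENNReal.ofReal_ne_top hs
      rwa [ENNReal.toReal_ofReal hε0pos.le] at this
    have hdiam_eq : Metric.ediam s = ENNReal.ofReal t := (ENNReal.ofReal_toReal hdiam_ne).symm
    rw [Measure.restrict_apply' hBmeas]
    rcases Set.eq_empty_or_nonempty (s ∩ B) with hempty | ⟨x, hxs, hxB⟩
    · rw [hempty, measure_empty]; exact zero_le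
    have hxA : x ∈ A k := hxB.1
    simp only [hA, Set.mem_iInter, Set.mem_setOf_eq] at hxA
    have key : ∀ r : ℝ, t < r → r < 1 / (k + 1 : ℝ) →
        μ (s ∩ B) ≤ ENNReal.ofReal (r ^ d'') := by
      intro r htr hrk
      obtain ⟨q, hq1, hq2⟩ := exists_rat_btwn htr
      have hq0 : 0 < (q : ℝ) := lt_of_le_of_lt ht0 hq1
      have hsub : s ⊆ ball x (q : ℝ) := by
        intro y hy
        rw [mem_ball]
        have hed : edist y x ≤ EMetric.diam s := EMetric.edist_le_diam_of_mem hy hxs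
        have : dist y x ≤ t := by
          rw [dist_edist, ht]
          exact ENNReal.toReal_mono hdiam_ne hed
        linarith
      calc μ (s ∩ B) ≤ μ (ball x (q : ℝ)) :=
            measure_mono fun y hy => hsub hy.1
        _ ≤ ENNReal.ofReal ((q : ℝ) ^ d'') := hxA q hq0 (hq2.trans hrk)
        _ ≤ ENNReal.ofReal (r ^ d'') :=
            ENNReal.ofReal_le_ofReal (Real.rpow_le_rpow hq0.le hq2.le hd''0.le)
    have hgap : 0 < 1 / (k + 1 : ℝ) - t := by linarith
    have hlim : μ (s ∩ B) ≤ ENNReal.ofReal (t ^ d'') := by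
      set g : ℕ → ℝ := fun n => t + (1 / (k + 1 : ℝ) - t) / (n + 2) with hg
      have hgt : ∀ n, t < g n := fun n => by
        have : 0 < (1 / (k + 1 : ℝ) - t) / (n + 2) := by positivity
        simp only [hg]; linarith
      have hglt : ∀ n, g n < 1 / (k + 1 : ℝ) := by
        intro n
        have h2n : (1 / (k + 1 : ℝ) - t) / (n + 2) < 1 / (k + 1 : ℝ) - t := by
          apply div_lt_self hgap
          have : (0:ℝ) ≤ n := Nat.cast_nonneg n
          linarith
        simp only [hg]; linarith
      have htend : Tendsto g atTop (nhds t) := by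
        have h1' : Tendsto (fun n : ℕ => ((n : ℝ) + 2)) atTop atTop :=
          tendsto_atTop_add_const_right _ _ tendsto_natCast_atTop_atTop
        have h2' : Tendsto (fun n : ℕ => (1 / (k + 1 : ℝ) - t) / (n + 2)) atTop (nhds 0) := by
          simpa [div_eq_mul_inv] using h1'.inv_tendsto_atTop.const_mul (1 / (k + 1 : ℝ) - t)
        have := h2'.const_add t
        simpa [hg] using this
      have htend2 : Tendsto (fun n => ENNReal.ofReal (g n ^ d'')) atTop
          (nhds (ENNReal.ofReal (t ^ d''))) := by
        apply (ENNReal.continuous_ofReal.continuousAt).tendsto.comp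
        exact (Real.continuousAt_rpow_const t d'' (Or.inr hd''0.le)).tendsto.comp htend
      exact ge_of_tendsto htend2 (Eventually.of_forall fun n => key (g n) (hgt n) (hglt n))
    refine hlim.trans ?_
    rcases eq_or_lt_of_le ht0 with ht0' | ht0'
    · rw [← ht0', Real.zero_rpow hd''0.ne', hdiam_eq, ← ht0']
      simp
    · have hrle : t ^ d'' ≤ t ^ d' :=
        Real.rpow_le_rpow_of_exponent_ge ht0' (htε0.trans hε0le1) h2.le
      rw [hdiam_eq, ENNReal.ofReal_rpow_of_pos ht0']
      exact ENNReal.ofReal_le_ofReal hrle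
  -- conclude
  have hμH : μH[d'] Z ≠ 0 := by
    have hle : μ B ≤ μH[d'] B := by
      have := Measure.le_iff.mp hmass B hBmeas
      rwa [Measure.restrict_apply' hBmeas, Set.inter_self] at this
    have : 0 < μH[d'] Z :=
      lt_of_lt_of_le hμB (hle.trans (measure_mono fun y hy => hy.2))
    exact this.ne'
  have hcoe : ((d'.toNNReal : ℝ≥0∞)) ≤ dimH Z := by
    apply le_dimH_of_hausdorffMeasure_ne_zero (d := d'.toNNReal)
    rwa [Real.coe_toNNReal _ h1.le]
  rwa [ENNReal.ofReal]

/-- Mass distribution principle: if the lower pointwise dimension of `μ` is at least `d`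
almost everywhere, then the Hausdorff dimension of `μ` is at least `d`. -/
theorem stmt_9
    {X : Type*} [MetricSpace X] [MeasurableSpace X] [BorelSpace X]
    (μ : Measure X) [IsProbabilityMeasure μ]
    (d : ℝ) (hd : 0 ≤ d)
    (hlower : ∀ᵐ x ∂μ, (d : ℝ) ≤
      liminf (fun r : ℝ => Real.log (μ (ball x r)).toReal / Real.log r)
        (nhdsWithin 0 (Set.Ioi 0))) :
    ENNReal.ofReal d ≤
      ⨅ (Z : Set X) (_ : MeasurableSet Z) (_ : μ Zᶜ = 0), dimH Z := by
  refine le_iInf fun Z => le_iInf fun hZ => le_iInf fun hZc => ?_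
  refine le_of_forall_lt fun c hc => ?_
  have hcne : c ≠ ⊤ := (hc.trans_le le_top).ne
  have hdpos : 0 < d := by
    by_contra hd0
    push_neg at hd0
    have : ENNReal.ofReal d = 0 := by
      rw [ENNReal.ofReal_eq_zero]; exact hd0
    rw [this] at hc
    exact (not_lt_of_ge (zero_le (a := c))) hc
  have hcd : c.toReal < d := (ENNReal.lt_ofReal_iff_toReal_lt hcne).mp hc
  set d' : ℝ := (c.toReal + d) / 2 with hd'
  set d'' : ℝ := (d' + d) / 2 with hd''
  have hct0 : 0 ≤ c.toReal := ENNReal.toReal_nonneg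
  have h1 : 0 < d' := by rw [hd']; linarith
  have h2 : d' < d'' := by rw [hd'', hd']; linarith
  have h3 : d'' < d := by rw [hd'', hd']; linarith
  have hmeasure : ∀ᵐ x ∂μ, ∀ᶠ r in nhdsWithin 0 (Set.Ioi 0),
      μ (ball x r) ≤ ENNReal.ofReal (r ^ d'') := by
    filter_upwards [hlower] with x hx
    have hev := liminf_aux9 h3 hdpos hx
    have hlt1 : ∀ᶠ r in nhdsWithin (0:ℝ) (Set.Ioi 0), r < 1 :=
      eventually_nhdsWithin_of_eventually_nhds (eventually_lt_nhds zero_lt_one)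
    have hpos : ∀ᶠ r in nhdsWithin (0:ℝ) (Set.Ioi 0), 0 < r :=
      eventually_mem_nhdsWithin
    filter_upwards [hev, hlt1, hpos] with r h1' h2' h3'
    set m : ℝ := (μ (ball x r)).toReal with hm
    have hlogr : Real.log r < 0 := Real.log_neg h3' h2'
    have hlm : Real.log m < d'' * Real.log r := (lt_div_iff_of_neg hlogr).mp h1'
    have hmlt : m < r ^ d'' := by
      rcases eq_or_lt_of_le (show (0:ℝ) ≤ m from ENNReal.toReal_nonneg) with h0 | h0
      · rw [← h0]; exact Real.rpow_pos_of_pos h3' d''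
      · calc m = Real.exp (Real.log m) := (Real.exp_log h0).symm
          _ < Real.exp (d'' * Real.log r) := Real.exp_lt_exp.mpr hlm
          _ = r ^ d'' := by rw [Real.rpow_def_of_pos h3', mul_comm]
    have hne : μ (ball x r) ≠ ⊤ := measure_ne_top μ _
    rw [← ENNReal.ofReal_toReal hne]
    exact ENNReal.ofReal_le_ofReal hmlt.le
  have hdim := main_aux9 μ hZ hZc h1 h2 hmeasure
  refine lt_of_lt_of_le ?_ hdim
  rw [ENNReal.lt_ofReal_iff_toReal_lt hcne]
  rw [hd']; linarith
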